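/- Let β > 0 and let b : I → (0,∞) be twice differentiable on an open interval I. Then β²(b(t)b''(t) + b'(t)²) + 2b(t)² = 0 for all t ∈ I if and only if there exist constants c > 0 and φ₀ ∈ ℝ such that b(t)² = c·sin(2t/β + φ₀) for all t ∈ I. -/

import Mathlib

open Real Set Filter Topology

lemma const_on_open_convex {I : Set ℝ} (hIo : IsOpen I) (hIc : Convex ℝ I)
    {f : ℝ → ℝ} (hf : ∀ t ∈ I, HasDerivAt f 0 t) :
    ∀ x ∈ I, ∀ y ∈ I, f x = f y := by
  intro x hx y hy
  refine hIc.is_const_of_fderivWithin_eq_zero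
    (fun t ht => ((hf t ht).differentiableAt).differentiableWithinAt)
    (fun t ht => ?_) hx hy
  rw [fderivWithin_of_isOpen hIo ht]
  have := (hf t ht).hasFDerivAt.fderiv
  rw [this]
  ext s
  simp

/-- For `β > 0` and a twice differentiable positive `b` on an open interval `I`,
`β²(b b'' + b'²) + 2b² = 0` on `I` iff there exist `c > 0` and `φ₀ ∈ ℝ` with
`b(t)² = c·sin(2t/β + φ₀)` on `I`. -/
theorem second_factor_eps_one_solution (β : ℝ) (hβ : 0 < β)
    (I : Set ℝ) (hI : ∃ x y : ℝ, I = Set.Ioo x y)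
    (b : ℝ → ℝ) (hbpos : ∀ t ∈ I, 0 < b t)
    (hb1 : ∀ t ∈ I, DifferentiableAt ℝ b t)
    (hb2 : ∀ t ∈ I, DifferentiableAt ℝ (deriv b) t) :
    (∀ t ∈ I,
        β ^ 2 * (b t * deriv (deriv b) t + (deriv b t) ^ 2) + 2 * (b t) ^ 2 = 0) ↔
      ∃ c φ₀ : ℝ, 0 < c ∧ ∀ t ∈ I, (b t) ^ 2 = c * Real.sin (2 * t / β + φ₀) := by
  obtain ⟨x₀, y₀, hIeq⟩ := hI
  have hIo : IsOpen I := hIeq ▸ isOpen_Ioo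
  have hIc : Convex ℝ I := hIeq ▸ convex_Ioo x₀ y₀
  have hβ' : (β : ℝ) ≠ 0 := ne_of_gt hβ
  set ω : ℝ := 2 / β with hωdef
  have hω : ω ≠ 0 := by
    simp [hωdef, hβ']
  set u : ℝ → ℝ := fun t => b t ^ 2 with hu
  set v : ℝ → ℝ := fun t => 2 * b t * deriv b t with hv
  have hU : ∀ t ∈ I, HasDerivAt u (v t) t := by
    intro t ht
    have := (hb1 t ht).hasDerivAt.pow 2
    rw [hu]
    refine this.congr_deriv ?_
    simp only [hv]
    norm_num
  have hVgen : ∀ t ∈ I,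
      HasDerivAt v (2 * (deriv b t) ^ 2 + 2 * (b t * deriv (deriv b) t)) t := by
    intro t ht
    have h0 := ((hb1 t ht).hasDerivAt.mul (hb2 t ht).hasDerivAt).const_mul 2
    have hfun : (fun y => 2 * (b * deriv b) y) = v := by
      funext y; simp only [hv, Pi.mul_apply]; ring
    rw [hfun] at h0
    refine h0.congr_deriv ?_
    ring
  constructor
  · intro hF
    rcases I.eq_empty_or_nonempty with hE | ⟨t0, ht0⟩
    · exact ⟨1, 0, one_pos, by simp [hE]⟩
    have hV : ∀ t ∈ I, HasDerivAt v (-(ω ^ 2) * u t) t := by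
      intro t ht
      have h1 := hVgen t ht
      refine h1.congr_deriv ?_
      have h2 := hF t ht
      have : -(ω ^ 2) * u t = 2 * (deriv b t) ^ 2 + 2 * (b t * deriv (deriv b) t) := by
        have hβ2 : β ^ 2 ≠ 0 := pow_ne_zero 2 hβ'
        simp only [hu, hωdef]
        field_simp
        linear_combination (-1) * h2
      linarith [this]
    set g1 : ℝ → ℝ := fun t => u t * Real.cos (ω * t) - (v t / ω) * Real.sin (ω * t) with hg1def
    set g2 : ℝ → ℝ := fun t => u t * Real.sin (ω * t) + (v t / ω) * Real.cos (ω * t) with hg2def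
    have hcos : ∀ t : ℝ, HasDerivAt (fun s => Real.cos (ω * s)) (-Real.sin (ω * t) * ω) t := by
      intro t
      simpa using ((hasDerivAt_id t).const_mul ω).cos
    have hsin : ∀ t : ℝ, HasDerivAt (fun s => Real.sin (ω * s)) (Real.cos (ω * t) * ω) t := by
      intro t
      simpa using ((hasDerivAt_id t).const_mul ω).sin
    have hg1 : ∀ t ∈ I, HasDerivAt g1 0 t := by
      intro t ht
      have := ((hU t ht).mul (hcos t)).sub (((hV t ht).div_const ω).mul (hsin t))
      refine this.congr_deriv ?_
      field_simp
      ring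
    have hg2 : ∀ t ∈ I, HasDerivAt g2 0 t := by
      intro t ht
      have := ((hU t ht).mul (hsin t)).add (((hV t ht).div_const ω).mul (hcos t))
      refine this.congr_deriv ?_
      field_simp
      ring
    set A : ℝ := g1 t0 with hAdef
    set B : ℝ := g2 t0 with hBdef
    have huAB : ∀ t ∈ I, u t = A * Real.cos (ω * t) + B * Real.sin (ω * t) := by
      intro t ht
      have h1 : g1 t = A := const_on_open_convex hIo hIc hg1 t ht t0 ht0
      have h2 : g2 t = B := const_on_open_convex hIo hIc hg2 t ht t0 ht0
      have hpy := Real.sin_sq_add_cos_sq (ω * t)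
      rw [← h1, ← h2]
      simp only [hg1def, hg2def]
      linear_combination (-(u t)) * hpy
    set z : ℂ := ⟨B, A⟩ with hzdef
    have hz : z ≠ 0 := by
      intro h
      have hA : A = 0 := by
        have := congrArg Complex.im h
        simpa [hzdef] using this
      have hB : B = 0 := by
        have := congrArg Complex.re h
        simpa [hzdef] using this
      have h3 := huAB t0 ht0
      rw [hA, hB] at h3
      have h4 : u t0 = 0 := by simpa using h3
      have h4' : b t0 ^ 2 = 0 := h4
      have h5 := hbpos t0 ht0
      nlinarith [h4', h5]
    refine ⟨‖z‖, z.arg, ?_, ?_⟩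
    · exact norm_pos_iff.mpr hz
    · intro t ht
      have hcosarg : Real.cos z.arg = B / ‖z‖ := by
        simpa [hzdef] using Complex.cos_arg hz
      have hsinarg : Real.sin z.arg = A / ‖z‖ := by
        simpa [hzdef] using Complex.sin_arg z
      have habs : ‖z‖ ≠ 0 := norm_ne_zero_iff.mpr hz
      have hωt : 2 * t / β + z.arg = ω * t + z.arg := by
        rw [hωdef]; ring
      rw [hωt, Real.sin_add, hcosarg, hsinarg]
      have h6 := huAB t ht
      have h7 : b t ^ 2 = A * Real.cos (ω * t) + B * Real.sin (ω * t) := h6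
      field_simp
      linear_combination h7
  · rintro ⟨c, φ₀, hc, hbc⟩ t ht
    set s' : ℝ → ℝ := fun x => c * Real.cos (2 * x / β + φ₀) * (2 / β) with hs'def
    have hS : ∀ x : ℝ, HasDerivAt (fun y => c * Real.sin (2 * y / β + φ₀)) (s' x) x := by
      intro x
      have h0 : HasDerivAt (fun y : ℝ => 2 * y / β + φ₀) (2 / β) x := by
        simpa using (((hasDerivAt_id x).const_mul 2).div_const β).add_const φ₀
      simpa [hs'def, mul_assoc] using (h0.sin.const_mul c)
    have hveq : ∀ x ∈ I, v x = s' x := by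
      intro x hx
      have hsu : (fun y => c * Real.sin (2 * y / β + φ₀)) =ᶠ[nhds x] u :=
        Filter.eventuallyEq_of_mem (hIo.mem_nhds hx) (fun y hy => (hbc y hy).symm)
      have h1 : HasDerivAt (fun y => c * Real.sin (2 * y / β + φ₀)) (v x) x :=
        (hU x hx).congr_of_eventuallyEq hsu
      exact h1.unique (hS x)
    have hs'v : s' =ᶠ[nhds t] v :=
      (Filter.eventuallyEq_of_mem (hIo.mem_nhds ht) hveq).symm
    have h2 : HasDerivAt s' (2 * (deriv b t) ^ 2 + 2 * (b t * deriv (deriv b) t)) t :=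
      (hVgen t ht).congr_of_eventuallyEq hs'v
    have h3 : HasDerivAt s' (c * (-Real.sin (2 * t / β + φ₀) * (2 / β)) * (2 / β)) t := by
      have h0 : HasDerivAt (fun y : ℝ => 2 * y / β + φ₀) (2 / β) t := by
        simpa using (((hasDerivAt_id t).const_mul 2).div_const β).add_const φ₀
      exact (h0.cos.const_mul c).mul_const (2 / β)
    have h4 := h2.unique h3
    have h5 := hbc t ht
    have hβ2 : β ^ 2 ≠ 0 := pow_ne_zero 2 hβ'
    have h6 : c * Real.sin (2 * t / β + φ₀) = b t ^ 2 := h5.symm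
    rw [← h6] at *
    field_simp at h4 ⊢
    nlinarith [h4, h5]
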